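/- Let J ⊂ I be monomial ideals such that I is linear over J. If J is componentwise linear, then I is componentwise linear. Moreover, if J has a linear resolution and I is generated in a single degree, then I has a linear resolution. -/

import Mathlib

open MvPolynomial

/-- The monomial `x^u` in the polynomial ring `K[x_i : i ∈ σ]`. -/
noncomputable def mon (K : Type) [Field K] {σ : Type} (u : σ →₀ ℕ) :
    MvPolynomial σ K := MvPolynomial.monomial u 1

/-- Total degree of an exponent vector. -/
def mdeg {σ : Type} (u : σ →₀ ℕ) : ℕ := u.sum fun _ e => e

/-- The monomial ideal generated by the monomials with exponent vectors in `S`. -/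
noncomputable def monIdeal (K : Type) [Field K] {σ : Type} (S : Set (σ →₀ ℕ)) :
    Ideal (MvPolynomial σ K) := Ideal.span ((mon K) '' S)

/-- An ideal is generated by variables. -/
def genByVars {K : Type} [Field K] {σ : Type} (J : Ideal (MvPolynomial σ K)) : Prop :=
  ∃ A : Set σ, J = Ideal.span ((fun i => (X i : MvPolynomial σ K)) '' A)

/-- An ideal is generated by linear forms. -/
def genByLinForms {K : Type} [Field K] {σ : Type} (J : Ideal (MvPolynomial σ K)) : Prop :=
  ∃ S : Set (MvPolynomial σ K), (∀ f ∈ S, f.IsHomogeneous 1) ∧ J = Ideal.span S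

/-- `S` is an antichain under divisibility of monomials, i.e. it is the minimal
monomial generating set `G(I)` of the monomial ideal `I` it generates. -/
def IsMinGenSet {σ : Type} (S : Set (σ →₀ ℕ)) : Prop :=
  ∀ u ∈ S, ∀ v ∈ S, u ≤ v → u = v

/-- A monomial ideal, presented by its minimal monomial generating set `S`, is
quasi-linear if for every `u ∈ S` the colon ideal `(G(I) \ {u}) : u` is generated
by variables. -/
def QuasiLinear (K : Type) [Field K] {σ : Type} (S : Set (σ →₀ ℕ)) : Prop :=
  ∀ u ∈ S, genByVars (Submodule.colon (monIdeal K (S \ {u})) (Ideal.span {mon K u}))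

/-- A minimal graded free resolution of an ideal `I` in a polynomial ring:
graded free modules `F i = ⊕_k R(-dg i k)` of rank `b i`, differentials
`F (i+1) → F i` given by the matrices `A i`, whose entries are homogeneous of the
appropriate degree and of positive degree (this is minimality, i.e. all entries lie
in the graded maximal ideal), together with an augmentation `F 0 → I` given by the
homogeneous generators `g`, everything being exact. -/
structure MinFreeRes {K : Type} [Field K] {σ : Type} (I : Ideal (MvPolynomial σ K)) where
  b : ℕ → ℕ
  dg : (i : ℕ) → Fin (b i) → ℕ
  g : Fin (b 0) → MvPolynomial σ K
  A : (i : ℕ) → Matrix (Fin (b i)) (Fin (b (i+1))) (MvPolynomial σ K)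
  g_hom : ∀ k, (g k).IsHomogeneous (dg 0 k)
  A_hom : ∀ i k l, A i k l = 0 ∨
    ((A i k l).IsHomogeneous (dg (i+1) l - dg i k) ∧ dg i k < dg (i+1) l)
  aug_range : LinearMap.range (Fintype.linearCombination (MvPolynomial σ K)
      g) = I
  aug_exact : LinearMap.ker (Fintype.linearCombination (MvPolynomial σ K)
      g) = LinearMap.range ((A 0).mulVecLin)
  is_exact : ∀ i, LinearMap.ker ((A i).mulVecLin) = LinearMap.range ((A (i+1)).mulVecLin)

/-- The graded Betti number `β_{i,j}` read off from a minimal graded free resolution: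
the number of generators of the `i`-th free module of degree `j`. -/
noncomputable def MinFreeRes.beta {K : Type} [Field K] {σ : Type}
    {I : Ideal (MvPolynomial σ K)} (res : MinFreeRes I) (i j : ℕ) : ℕ :=
  (Finset.univ.filter fun k => res.dg i k = j).card

/-- `I` has a `d`-linear resolution: it has a minimal graded free resolution in which the
`i`-th free module is generated entirely in degree `i + d`, i.e. `β_{i,j}(I) = 0`
whenever `j - i ≠ d`. -/
def HasLinRes {K : Type} [Field K] {σ : Type} (I : Ideal (MvPolynomial σ K))
    (d : ℕ) : Prop :=
  ∃ res : MinFreeRes I, ∀ i k, res.dg i k = i + d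

/-- `reg I ≤ r`: a minimal graded free resolution of `I` has all generators of the
`i`-th free module in degrees `≤ i + r`, i.e. `β_{i,j}(I) = 0` whenever `j - i > r`. -/
def RegLE {K : Type} [Field K] {σ : Type} (I : Ideal (MvPolynomial σ K)) (r : ℕ) : Prop :=
  ∃ res : MinFreeRes I, ∀ i k, res.dg i k ≤ i + r

/-- A graded ideal `I` is componentwise linear if for every `j` the ideal generated by
the degree-`j` homogeneous elements of `I` has a `j`-linear resolution. -/
def CompLinear (K : Type) [Field K] {σ : Type} (I : Ideal (MvPolynomial σ K)) : Prop :=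
  ∀ j : ℕ, HasLinRes (Ideal.span {f | f ∈ I ∧ f.IsHomogeneous j}) j

section PartA

variable {K : Type} [Field K] {σ : Type}

theorem mon_ne_zero (u : σ →₀ ℕ) : mon K u ≠ 0 := by
  simp [mon, MvPolynomial.monomial_eq_zero]

theorem mon_mul (a b : σ →₀ ℕ) : mon K a * mon K b = mon K (a + b) := by
  simp [mon, MvPolynomial.monomial_mul]

theorem mdeg_eq_degree (u : σ →₀ ℕ) : mdeg u = u.degree := by
  simp [mdeg, Finsupp.degree_apply, Finsupp.sum]

theorem mdeg_add (a b : σ →₀ ℕ) : mdeg (a + b) = mdeg a + mdeg b := by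
  simp [mdeg, Finsupp.sum_add_index']

theorem mon_isHomogeneous (u : σ →₀ ℕ) : (mon K u).IsHomogeneous (mdeg u) :=
  MvPolynomial.isHomogeneous_monomial _ (mdeg_eq_degree u).symm

theorem support_mon (u : σ →₀ ℕ) : (mon K u).support = {u} := by
  classical
  simp [mon, MvPolynomial.support_monomial]

/-- membership in a monomial ideal: every monomial in the support is divisible by
a generator. -/
theorem mem_monIdeal {T : Set (σ →₀ ℕ)} {f : MvPolynomial σ K} :
    f ∈ monIdeal K T ↔ ∀ m ∈ f.support, ∃ t ∈ T, t ≤ m := by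
  classical
  constructor
  · intro hf
    refine Submodule.span_induction ?_ ?_ ?_ ?_ hf
    · rintro x ⟨t, ht, rfl⟩ m hm
      rw [support_mon] at hm
      simp only [Finset.mem_singleton] at hm
      exact ⟨t, ht, le_of_eq hm.symm⟩
    · simp
    · intro x y _ _ hx hy m hm
      have := MvPolynomial.support_add hm
      rw [Finset.mem_union] at this
      rcases this with h | h
      · exact hx m h
      · exact hy m h
    · intro r x _ hx m hm
      have hsub := MvPolynomial.support_mul r x hm
      rw [Finset.mem_add] at hsub
      obtain ⟨a, ha, b, hb, rfl⟩ := hsub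
      obtain ⟨t, ht, htb⟩ := hx b hb
      exact ⟨t, ht, le_trans htb le_add_self⟩
  · intro h
    rw [MvPolynomial.as_sum f]
    refine Ideal.sum_mem _ (fun m hm => ?_)
    obtain ⟨t, ht, htm⟩ := h m hm
    have : (MvPolynomial.monomial m) (MvPolynomial.coeff m f)
        = (MvPolynomial.monomial (m - t)) (MvPolynomial.coeff m f) * mon K t := by
      rw [mon, MvPolynomial.monomial_mul, mul_one, tsub_add_cancel_of_le htm]
    rw [this]
    exact Ideal.mul_mem_left _ _ (Ideal.subset_span ⟨t, ht, rfl⟩)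

theorem mon_mem_monIdeal {T : Set (σ →₀ ℕ)} {m : σ →₀ ℕ} :
    mon K m ∈ monIdeal K T ↔ ∃ t ∈ T, t ≤ m := by
  rw [mem_monIdeal, support_mon]
  simp

theorem monIdeal_empty : monIdeal K (∅ : Set (σ →₀ ℕ)) = ⊥ := by
  simp [monIdeal]

theorem monIdeal_union (T₁ T₂ : Set (σ →₀ ℕ)) :
    monIdeal K (T₁ ∪ T₂) = monIdeal K T₁ ⊔ monIdeal K T₂ := by
  rw [monIdeal, Set.image_union, Ideal.span_union]; rfl

theorem monIdeal_singleton (w : σ →₀ ℕ) :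
    monIdeal K ({w} : Set (σ →₀ ℕ)) = Ideal.span {mon K w} := by
  rw [monIdeal, Set.image_singleton]

theorem monIdeal_mono {T₁ T₂ : Set (σ →₀ ℕ)} (h : T₁ ⊆ T₂) :
    monIdeal K T₁ ≤ monIdeal K T₂ :=
  Ideal.span_mono (Set.image_mono h)

theorem monIdeal_le_iff {T : Set (σ →₀ ℕ)} {I : Ideal (MvPolynomial σ K)} :
    monIdeal K T ≤ I ↔ ∀ t ∈ T, mon K t ∈ I := by
  rw [monIdeal, Ideal.span_le]
  constructor
  · intro h t ht; exact h ⟨t, ht, rfl⟩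
  · rintro h x ⟨t, ht, rfl⟩; exact h t ht

theorem mem_support_mul_mon {f : MvPolynomial σ K} {u m : σ →₀ ℕ} :
    m ∈ (f * mon K u).support ↔ ∃ m' ∈ f.support, m = m' + u := by
  classical
  constructor
  · intro hm
    have hsub := MvPolynomial.support_mul f (mon K u) hm
    rw [Finset.mem_add] at hsub
    obtain ⟨a, ha, b, hb, rfl⟩ := hsub
    rw [support_mon, Finset.mem_singleton] at hb
    exact ⟨a, ha, by rw [hb]⟩
  · rintro ⟨m', hm', rfl⟩
    rw [MvPolynomial.mem_support_iff]
    rw [mon, MvPolynomial.coeff_mul_monomial, mul_one]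
    exact MvPolynomial.mem_support_iff.mp hm'

/-- the colon ideal of a monomial ideal by a monomial. -/
theorem colon_monIdeal (T : Set (σ →₀ ℕ)) (u : σ →₀ ℕ) :
    Submodule.colon (monIdeal K T) (Ideal.span {mon K u})
      = monIdeal K {w | ∃ t ∈ T, w = t - u} := by
  ext f
  rw [Ideal.mem_colon_span_singleton, mem_monIdeal, mem_monIdeal]
  constructor
  · intro h m hm
    obtain ⟨t, ht, htm⟩ := h (m + u) (mem_support_mul_mon.mpr ⟨m, hm, rfl⟩)
    exact ⟨t - u, ⟨t, ht, rfl⟩, tsub_le_iff_right.mpr htm⟩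
  · intro h m hm
    rw [mem_support_mul_mon] at hm
    obtain ⟨m', hm', rfl⟩ := hm
    obtain ⟨w, ⟨t, ht, rfl⟩, hw⟩ := h m' hm'
    exact ⟨t, ht, tsub_le_iff_right.mp hw⟩

end PartA
section PartA2

variable {K : Type} [Field K] {σ : Type}

theorem mdeg_of_isHomogeneous {f : MvPolynomial σ K} {j : ℕ} (hf : f.IsHomogeneous j)
    {m : σ →₀ ℕ} (hm : m ∈ f.support) : mdeg m = j := by
  by_contra h
  rw [mdeg_eq_degree] at h
  exact MvPolynomial.mem_support_iff.mp hm (hf.coeff_eq_zero h)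

/-- the ideal generated by the degree-`j` part of a monomial ideal. -/
theorem component_monIdeal (T : Set (σ →₀ ℕ)) (j : ℕ) :
    Ideal.span {f | f ∈ monIdeal K T ∧ f.IsHomogeneous j}
      = monIdeal K {m | mdeg m = j ∧ ∃ t ∈ T, t ≤ m} := by
  apply le_antisymm
  · rw [Ideal.span_le]
    rintro f ⟨hfI, hfh⟩
    rw [SetLike.mem_coe, mem_monIdeal]
    intro m hm
    obtain ⟨t, ht, htm⟩ := mem_monIdeal.mp hfI m hm
    exact ⟨m, ⟨mdeg_of_isHomogeneous hfh hm, ⟨t, ht, htm⟩⟩, le_refl m⟩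
  · rw [monIdeal_le_iff]
    rintro m ⟨hdeg, t, ht, htm⟩
    apply Ideal.subset_span
    exact ⟨mon_mem_monIdeal.mpr ⟨t, ht, htm⟩, hdeg ▸ mon_isHomogeneous m⟩

/-- support degrees of elements of an ideal generated by homogeneous elements of
degree `e` are bounded below by `e`. -/
theorem le_mdeg_of_mem_span_homog {Sf : Set (MvPolynomial σ K)} {e : ℕ}
    (hS : ∀ g ∈ Sf, g.IsHomogeneous e) {f : MvPolynomial σ K} (hf : f ∈ Ideal.span Sf) :
    ∀ m ∈ f.support, e ≤ mdeg m := by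
  classical
  refine Submodule.span_induction ?_ ?_ ?_ ?_ hf
  · intro g hg m hm
    exact le_of_eq (mdeg_of_isHomogeneous (hS g hg) hm).symm
  · simp
  · intro x y _ _ hx hy m hm
    have := MvPolynomial.support_add hm
    rw [Finset.mem_union] at this
    rcases this with h | h
    · exact hx m h
    · exact hy m h
  · intro r x _ hx m hm
    have hsub := MvPolynomial.support_mul r x hm
    rw [Finset.mem_add] at hsub
    obtain ⟨a, ha, b, hb, rfl⟩ := hsub
    calc e ≤ mdeg b := hx b hb
    _ ≤ mdeg a + mdeg b := le_add_self
    _ = mdeg (a + b) := (mdeg_add a b).symm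

theorem eq_single_of_mdeg_one {m : σ →₀ ℕ} (hm : mdeg m = 1) :
    ∃ s, m = Finsupp.single s 1 := by
  classical
  have hne : m.support.Nonempty := by
    rcases Finset.eq_empty_or_nonempty m.support with h | h
    · exfalso
      have : m = 0 := by rwa [← Finsupp.support_eq_empty]
      rw [this] at hm; simp [mdeg] at hm
    · exact h
  obtain ⟨s, hs⟩ := hne
  refine ⟨s, ?_⟩
  have hle : m s ≤ mdeg m := by
    rw [mdeg_eq_degree, Finsupp.degree]
    exact Finset.single_le_sum (fun i _ => Nat.zero_le _) hs
  have hs1 : m s = 1 := by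
    have h1 : 1 ≤ m s := Nat.one_le_iff_ne_zero.mpr (Finsupp.mem_support_iff.mp hs)
    omega
  -- support must be exactly {s}
  have hsupp : m.support = {s} := by
    by_contra h
    obtain ⟨t, ht, hts⟩ : ∃ t ∈ m.support, t ≠ s := by
      by_contra h2
      push_neg at h2
      exact h (Finset.eq_singleton_iff_unique_mem.mpr ⟨hs, h2⟩)
    have : m s + m t ≤ mdeg m := by
      rw [mdeg_eq_degree, Finsupp.degree_apply]
      have := Finset.add_sum_erase _ (fun i => m i) hs
      rw [← this]
      have ht' : t ∈ m.support.erase s := Finset.mem_erase.mpr ⟨hts, ht⟩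
      exact Nat.add_le_add_left (Finset.single_le_sum (fun i _ => Nat.zero_le _) ht') _
    have h1 : 1 ≤ m t := Nat.one_le_iff_ne_zero.mpr (Finsupp.mem_support_iff.mp ht)
    omega
  ext t
  rcases eq_or_ne t s with rfl | h
  · simp [hs1]
  · have : t ∉ m.support := by rw [hsupp]; simp [h]
    rw [Finsupp.notMem_support_iff.mp this]
    simp [Finsupp.single_apply, (Ne.symm h : ¬ s = t)]

theorem X_eq_mon (s : σ) : (MvPolynomial.X s : MvPolynomial σ K) = mon K (Finsupp.single s 1) := rfl

theorem span_X_eq_monIdeal (B : Set σ) :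
    Ideal.span ((fun i => (MvPolynomial.X i : MvPolynomial σ K)) '' B)
      = monIdeal K {m | ∃ s ∈ B, m = Finsupp.single s 1} := by
  rw [monIdeal]
  congr 1
  ext f
  constructor
  · rintro ⟨s, hs, rfl⟩; exact ⟨Finsupp.single s 1, ⟨s, hs, rfl⟩, rfl⟩
  · rintro ⟨m, ⟨s, hs, rfl⟩, rfl⟩; exact ⟨s, hs, rfl⟩

theorem mon_mem_span_X {B : Set σ} {m : σ →₀ ℕ} :
    mon K m ∈ Ideal.span ((fun i => (MvPolynomial.X i : MvPolynomial σ K)) '' B)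
      ↔ ∃ s ∈ B, m s ≠ 0 := by
  rw [span_X_eq_monIdeal, mon_mem_monIdeal]
  constructor
  · rintro ⟨t, ⟨s, hs, rfl⟩, htm⟩
    refine ⟨s, hs, ?_⟩
    have := htm s
    simp [Finsupp.single_apply] at this
    omega
  · rintro ⟨s, hs, hms⟩
    refine ⟨Finsupp.single s 1, ⟨s, hs, rfl⟩, ?_⟩
    intro t
    rcases eq_or_ne t s with rfl | h
    · simp; omega
    · simp [Finsupp.single_apply, (Ne.symm h : ¬ s = t)]

/-- A monomial ideal generated by linear forms is generated by variables. -/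
theorem genByVars_of_monIdeal_genByLinForms {T : Set (σ →₀ ℕ)}
    (h : genByLinForms (monIdeal K T)) : genByVars (monIdeal K T) := by
  classical
  obtain ⟨L, hL1, hLspan⟩ := h
  refine ⟨{s | MvPolynomial.X s ∈ monIdeal K T}, ?_⟩
  apply le_antisymm
  · rw [hLspan, Ideal.span_le]
    intro f hf
    have hfI : f ∈ monIdeal K T := by rw [hLspan]; exact Ideal.subset_span hf
    rw [SetLike.mem_coe]
    -- decompose f into monomials, each a variable
    rw [MvPolynomial.as_sum f]
    refine Ideal.sum_mem _ (fun m hm => ?_)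
    obtain ⟨s, rfl⟩ := eq_single_of_mdeg_one (mdeg_of_isHomogeneous (hL1 f hf) hm)
    have hXs : (MvPolynomial.X s : MvPolynomial σ K) ∈ monIdeal K T := by
      rw [X_eq_mon, mon_mem_monIdeal]
      exact mem_monIdeal.mp hfI _ hm
    have heq : (MvPolynomial.monomial (Finsupp.single s 1)) (MvPolynomial.coeff (Finsupp.single s 1) f)
        = MvPolynomial.C (MvPolynomial.coeff (Finsupp.single s 1) f) * MvPolynomial.X s := by
      rw [show (MvPolynomial.X s : MvPolynomial σ K)
          = MvPolynomial.monomial (Finsupp.single s 1) 1 from rfl,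
        MvPolynomial.C_mul_monomial, mul_one]
    rw [heq, ← hLspan] at *
    exact Ideal.mul_mem_left _ _ (Ideal.subset_span ⟨s, hXs, rfl⟩)
  · rw [Ideal.span_le]
    rintro f ⟨s, hs, rfl⟩
    exact hs

end PartA2
section PartA3

variable {K : Type} [Field K] {σ : Type}

theorem interpolate_aux (k : ℕ) : ∀ (t M : σ →₀ ℕ), t ≤ M → mdeg t + k ≤ mdeg M →
    ∃ q, t ≤ q ∧ q ≤ M ∧ mdeg q = mdeg t + k := by
  induction k with
  | zero => intro t M h _; exact ⟨t, le_refl t, h, by simp⟩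
  | succ k ih =>
    intro t M h hk
    have hne : ∃ s, t s < M s := by
      by_contra hc
      push_neg at hc
      have : M = t := le_antisymm (Finsupp.le_def.mpr hc) h
      rw [this] at hk; omega
    obtain ⟨s, hs⟩ := hne
    set t' := t + Finsupp.single s 1 with ht'
    have ht'le : t' ≤ M := by
      rw [Finsupp.le_def]
      intro i
      rcases eq_or_ne i s with rfl | hi
      · simp [ht', Finsupp.single_apply]; omega
      · simp [ht', Finsupp.single_apply, (Ne.symm hi : ¬ s = i)]
        exact Finsupp.le_def.mp h i
    have hdeg' : mdeg t' = mdeg t + 1 := by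
      rw [ht', mdeg_add]
      simp [mdeg, Finsupp.sum_single_index]
    obtain ⟨q, h1, h2, h3⟩ := ih t' M ht'le (by omega)
    exact ⟨q, le_trans (by simp [ht']) h1, h2, by omega⟩

theorem interpolate {t M : σ →₀ ℕ} (h : t ≤ M) {j : ℕ} (h1 : mdeg t ≤ j)
    (h2 : j ≤ mdeg M) : ∃ q, t ≤ q ∧ q ≤ M ∧ mdeg q = j := by
  obtain ⟨k, rfl⟩ := Nat.exists_eq_add_of_le h1
  exact interpolate_aux k t M h h2

theorem finite_mdeg_le {n : ℕ} (j : ℕ) : {m : Fin n →₀ ℕ | mdeg m ≤ j}.Finite := by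
  refine (Finsupp.finite_of_nat_weight_le (fun _ => (1:ℕ)) (by simp) j).subset ?_
  intro m hm
  simp only [Set.mem_setOf_eq] at hm ⊢
  have : Finsupp.weight (fun _ => (1:ℕ)) m = mdeg m := by
    rw [mdeg_eq_degree, Finsupp.degree_eq_weight_one]
  omega

theorem mdeg_eq_sum_univ {n : ℕ} (m : Fin n →₀ ℕ) : mdeg m = ∑ i : Fin n, m i := by
  rw [mdeg, Finsupp.sum_fintype]
  intro _; rfl

theorem lex_add_right_iff {n : ℕ} (w w' v : Fin n →₀ ℕ) :
    toLex (w + v) < toLex (w' + v) ↔ toLex w < toLex w' := by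
  rw [Finsupp.Lex.lt_iff, Finsupp.Lex.lt_iff]
  constructor
  · rintro ⟨i, h1, h2⟩
    refine ⟨i, fun j hj => ?_, ?_⟩
    · have := h1 j hj
      simp only [ofLex_toLex, Finsupp.add_apply] at this ⊢
      omega
    · simp only [ofLex_toLex, Finsupp.add_apply] at h2 ⊢
      omega
  · rintro ⟨i, h1, h2⟩
    refine ⟨i, fun j hj => ?_, ?_⟩
    · have := h1 j hj
      simp only [ofLex_toLex, Finsupp.add_apply] at this ⊢
      omega
    · simp only [ofLex_toLex, Finsupp.add_apply] at h2 ⊢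
      omega

/-- the key lex lemma: if `w' ≤ z + w` is lex-larger than `w` of the same degree,
then `z` has a variable at the first-difference position `c`, and `w` is nonzero
somewhere above `c`. -/
theorem lex_witness {n : ℕ} {w w' z : Fin n →₀ ℕ} (hdeg : mdeg w' = mdeg w)
    (hlt : toLex w < toLex w') (hle : w' ≤ z + w) :
    ∃ c ℓ, z c ≠ 0 ∧ w ℓ ≠ 0 ∧ c < ℓ ∧ (∀ i, i < c → w i = w' i) ∧ w c < w' c := by
  obtain ⟨c, h1, h2⟩ := Finsupp.Lex.lt_iff.mp hlt
  simp only [ofLex_toLex] at h1 h2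
  have hzc : z c ≠ 0 := by
    have := Finsupp.le_def.mp hle c
    simp only [Finsupp.add_apply] at this
    omega
  have hl : ∃ ℓ, c < ℓ ∧ w ℓ ≠ 0 := by
    by_contra hc
    push_neg at hc
    have hlt' : mdeg w < mdeg w' := by
      rw [mdeg_eq_sum_univ, mdeg_eq_sum_univ]
      apply Finset.sum_lt_sum
      · intro i _
        rcases lt_trichotomy i c with h | h | h
        · exact le_of_eq (h1 i h)
        · subst h; exact le_of_lt h2
        · rw [hc i h]; exact Nat.zero_le _
      · exact ⟨c, Finset.mem_univ c, h2⟩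
    omega
  obtain ⟨ℓ, hcl, hwl⟩ := hl
  exact ⟨c, ℓ, hzc, hwl, hcl, h1, h2⟩

theorem sup_span_singleton_of_mem {R : Type*} [CommRing R] {I : Ideal R} {x : R}
    (h : x ∈ I) : I ⊔ Ideal.span {x} = I :=
  sup_eq_left.mpr (Ideal.span_le.mpr (by simpa using h))

end PartA3
section PartB1

variable {K : Type} [Field K] {σ : Type}

theorem homComp_mul {a b : MvPolynomial σ K} {c : ℕ} (ha : a.IsHomogeneous c) (m : ℕ) :
    MvPolynomial.homogeneousComponent (m + c) (a * b)
      = a * MvPolynomial.homogeneousComponent m b := by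
  classical
  conv_lhs => rw [← MvPolynomial.sum_homogeneousComponent b]
  rw [Finset.mul_sum, map_sum]
  have hterm : ∀ t, MvPolynomial.homogeneousComponent (m + c)
      (a * MvPolynomial.homogeneousComponent t b)
      = if t = m then a * MvPolynomial.homogeneousComponent t b else 0 := by
    intro t
    have hhom : (a * MvPolynomial.homogeneousComponent t b).IsHomogeneous (c + t) :=
      ha.mul (MvPolynomial.homogeneousComponent_isHomogeneous t b)
    rw [MvPolynomial.homogeneousComponent_of_mem
      ((MvPolynomial.mem_homogeneousSubmodule _ _).mpr hhom)]
    split_ifs with h1 h2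
    all_goals first | rfl | (exfalso; omega)
  rw [Finset.sum_congr rfl (fun t _ => hterm t)]
  by_cases hm : m ∈ Finset.range (b.totalDegree + 1)
  · rw [Finset.sum_ite_eq' (Finset.range (b.totalDegree + 1))
      m (fun t => a * MvPolynomial.homogeneousComponent t b), if_pos hm]
  · rw [Finset.sum_ite_eq' (Finset.range (b.totalDegree + 1))
      m (fun t => a * MvPolynomial.homogeneousComponent t b), if_neg hm]
    rw [MvPolynomial.homogeneousComponent_eq_zero _ b (by
      simp only [Finset.mem_range] at hm; omega), mul_zero]

theorem homComp_of_homog {p : MvPolynomial σ K} {m : ℕ} (hp : p.IsHomogeneous m) :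
    MvPolynomial.homogeneousComponent m p = p := by
  rw [MvPolynomial.homogeneousComponent_of_mem
    ((MvPolynomial.mem_homogeneousSubmodule _ _).mpr hp), if_pos rfl]

/-- homogeneous lifting through a matrix with homogeneous entries. -/
theorem exists_homog_preimage {a b : ℕ} (A : Matrix (Fin a) (Fin b) (MvPolynomial σ K))
    {c : ℕ} (hA : ∀ k l, (A k l).IsHomogeneous c) {y : Fin a → MvPolynomial σ K} {m : ℕ}
    (hy : ∀ k, (y k).IsHomogeneous (m + c)) (hex : ∃ x, A.mulVec x = y) :
    ∃ x, A.mulVec x = y ∧ ∀ l, (x l).IsHomogeneous m := by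
  obtain ⟨x, hx⟩ := hex
  refine ⟨fun l => MvPolynomial.homogeneousComponent m (x l), ?_,
    fun l => MvPolynomial.homogeneousComponent_isHomogeneous m (x l)⟩
  funext k
  have : A.mulVec (fun l => MvPolynomial.homogeneousComponent m (x l)) k
      = MvPolynomial.homogeneousComponent (m + c) (A.mulVec x k) := by
    simp only [Matrix.mulVec, dotProduct]
    rw [map_sum]
    refine Finset.sum_congr rfl (fun l _ => ?_)
    exact (homComp_mul (hA k l) m).symm
  rw [this, hx, homComp_of_homog (hy k)]

theorem hasLinRes_bot (d : ℕ) : HasLinRes (⊥ : Ideal (MvPolynomial σ K)) d := by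
  refine ⟨{ b := fun _ => 0
            dg := fun i _ => i + d
            g := Fin.elim0
            A := fun _ => fun k => Fin.elim0 k
            g_hom := fun k => Fin.elim0 k
            A_hom := fun _ k => Fin.elim0 k
            aug_range := ?_
            aug_exact := ?_
            is_exact := fun _ => ?_ }, fun _ _ => rfl⟩
  · rw [Fintype.range_linearCombination]
    simp
  · ext x
    have : x = 0 := Subsingleton.elim x 0
    subst this
    simp [Fintype.linearCombination_apply]
    exact Subsingleton.elim _ _
  · ext x
    have : x = 0 := Subsingleton.elim x 0
    subst this
    simp [Fintype.linearCombination_apply]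

theorem hasLinRes_congr {I I' : Ideal (MvPolynomial σ K)} (h : I = I') {d : ℕ}
    (hI : HasLinRes I d) : HasLinRes I' d := h ▸ hI

end PartB1
namespace ConeAux

variable {K : Type} [Field K] {σ : Type} {J : Ideal (MvPolynomial σ K)} {d : ℕ}
  {u : MvPolynomial σ K}

/-- helper: multiplication of a matrix with a column of another matrix. -/
theorem mulVec_col {a b c : ℕ} (A : Matrix (Fin a) (Fin b) (MvPolynomial σ K))
    (B : Matrix (Fin b) (Fin c) (MvPolynomial σ K)) (l : Fin c) :
    A.mulVec (fun j => B j l) = fun k => (A * B) k l := by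
  funext k
  simp [Matrix.mulVec, dotProduct, Matrix.mul_apply]

theorem lincomb_mulVec {a b : ℕ} (g : Fin a → MvPolynomial σ K)
    (φ : Matrix (Fin a) (Fin b) (MvPolynomial σ K)) (x : Fin b → MvPolynomial σ K) :
    Fintype.linearCombination (MvPolynomial σ K) g (φ.mulVec x)
      = ∑ l, x l * Fintype.linearCombination (MvPolynomial σ K) g
          (fun k => φ k l) := by
  simp only [Fintype.linearCombination_apply, smul_eq_mul, Matrix.mulVec, dotProduct,
    Finset.sum_mul, Finset.mul_sum]
  rw [Finset.sum_comm]
  refine Finset.sum_congr rfl fun l _ => Finset.sum_congr rfl fun k _ => by ring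

theorem lincomb_eq_sum_mul {a : ℕ} (g : Fin a → MvPolynomial σ K)
    (x : Fin a → MvPolynomial σ K) :
    Fintype.linearCombination (MvPolynomial σ K) g x
      = ∑ k, g k * x k := by
  rw [Fintype.linearCombination_apply]
  exact Finset.sum_congr rfl fun k _ => by rw [smul_eq_mul, mul_comm]

variable (P : MinFreeRes (Submodule.colon J (Ideal.span {u})))

/-- ranks of the resolution of `R/P` : `M 0 = R`, `M (i+1) = P`-resolution. -/
abbrev bM : ℕ → ℕ
  | 0 => 1
  | (i+1) => P.b i

/-- differentials of the augmented complex resolving `R/P`. -/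
def AM : (i : ℕ) → Matrix (Fin (bM P i)) (Fin (bM P (i+1))) (MvPolynomial σ K)
  | 0 => fun _ l => P.g l
  | (i+1) => P.A i

theorem AM_hom (hP : ∀ i k, P.dg i k = i + 1) :
    ∀ i k l, ((AM P i) k l).IsHomogeneous 1 := by
  intro i k l
  match i with
  | 0 =>
    have := P.g_hom l
    rwa [hP 0 l] at this
  | (i+1) =>
    rcases P.A_hom i k l with h | h
    · show ((P.A i) k l).IsHomogeneous 1
      rw [h]
      exact MvPolynomial.isHomogeneous_zero _ _ _
    · have := h.1
      rw [hP (i+1) l, hP i k] at this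
      have e : i + 1 + 1 - (i + 1) = 1 := by omega
      rwa [e] at this

theorem AM_comp_vec : ∀ (i : ℕ) (x : Fin (bM P (i+2)) → MvPolynomial σ K),
    (AM P i).mulVec ((AM P (i+1)).mulVec x) = 0 := by
  intro i x
  match i with
  | 0 =>
    have hy : ((P.A 0).mulVec x) ∈ LinearMap.ker (Fintype.linearCombination
        (MvPolynomial σ K) P.g) := by
      rw [P.aug_exact]
      exact ⟨x, rfl⟩
    have hy0 : Fintype.linearCombination (MvPolynomial σ K) P.g
        ((P.A 0).mulVec x) = 0 := hy
    funext k
    show ∑ l, P.g l * ((P.A 0).mulVec x) l = 0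
    rw [← lincomb_eq_sum_mul, hy0]
  | (i+1) =>
    have hy : ((P.A (i+1)).mulVec x) ∈ LinearMap.ker ((P.A i).mulVecLin) := by
      rw [P.is_exact i]
      exact ⟨x, rfl⟩
    exact hy

theorem AM_compM : ∀ i : ℕ, AM P i * AM P (i+1) = 0 := by
  intro i
  refine Matrix.ext fun k l => ?_
  have h0 : (AM P i).mulVec ((AM P (i+1)).mulVec (Pi.single l 1)) = 0 := AM_comp_vec P i _
  rw [Matrix.mulVec_single_one] at h0
  have h1 : (AM P i).mulVec (fun j => AM P (i+1) j l) = 0 := h0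
  rw [mulVec_col] at h1
  exact congrFun h1 k

theorem AM_exact : ∀ (i : ℕ) (m : Fin (bM P (i+1)) → MvPolynomial σ K),
    (AM P i).mulVec m = 0 → ∃ m₂, (AM P (i+1)).mulVec m₂ = m := by
  intro i m hm
  match i with
  | 0 =>
    have hm0 : Fintype.linearCombination (MvPolynomial σ K) P.g m = 0 := by
      have := congrFun hm ⟨0, Nat.zero_lt_one⟩
      rw [lincomb_eq_sum_mul]
      exact this
    have : m ∈ LinearMap.range ((P.A 0).mulVecLin) := by
      rw [← P.aug_exact]
      exact hm0
    obtain ⟨m₂, hm₂⟩ := this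
    exact ⟨m₂, hm₂⟩
  | (i+1) =>
    have : m ∈ LinearMap.range ((P.A (i+1)).mulVecLin) := by
      rw [← P.is_exact i]
      exact hm
    obtain ⟨m₂, hm₂⟩ := this
    exact ⟨m₂, hm₂⟩

theorem colon_to_M (c : MvPolynomial σ K) (hc : c ∈ Submodule.colon J (Ideal.span {u})) :
    ∃ m₁ : Fin (bM P 1) → MvPolynomial σ K,
      (AM P 0).mulVec m₁ = fun _ => c := by
  have : c ∈ LinearMap.range (Fintype.linearCombination (MvPolynomial σ K)
      P.g) := by rw [P.aug_range]; exact hc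
  obtain ⟨y, hy⟩ := this
  refine ⟨y, funext fun k => ?_⟩
  show ∑ l, P.g l * y l = c
  rw [← lincomb_eq_sum_mul, hy]

variable (F : MinFreeRes J)

theorem AF_hom (hF : ∀ i k, F.dg i k = i + d) :
    ∀ i k l, ((F.A i) k l).IsHomogeneous 1 := by
  intro i k l
  rcases F.A_hom i k l with h | h
  · rw [h]; exact MvPolynomial.isHomogeneous_zero _ _ _
  · have := h.1
    rw [hF (i+1) l, hF i k] at this
    have e : i + 1 + d - (i + d) = 1 := by omega
    rwa [e] at this

theorem gF_hom (hF : ∀ i k, F.dg i k = i + d) : ∀ k, (F.g k).IsHomogeneous d := by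
  intro k
  have := F.g_hom k
  rwa [hF 0 k, Nat.zero_add] at this

theorem AF_comp_vec : ∀ (i : ℕ) (x : Fin (F.b (i+2)) → MvPolynomial σ K),
    (F.A i).mulVec ((F.A (i+1)).mulVec x) = 0 := by
  intro i x
  have hy : ((F.A (i+1)).mulVec x) ∈ LinearMap.ker ((F.A i).mulVecLin) := by
    rw [F.is_exact i]
    exact ⟨x, rfl⟩
  exact hy

/-- the kernel condition at level `i` of the resolution `F` (level `0` is the
augmentation). -/
def KerC : (i : ℕ) → (Fin (F.b i) → MvPolynomial σ K) → Prop
  | 0, y => Fintype.linearCombination (MvPolynomial σ K) F.g y = 0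
  | (j+1), y => (F.A j).mulVec y = 0

theorem exactF : ∀ (i : ℕ) (y : Fin (F.b i) → MvPolynomial σ K),
    KerC F i y → ∃ x, (F.A i).mulVec x = y := by
  intro i y hy
  match i with
  | 0 =>
    have : y ∈ LinearMap.range ((F.A 0).mulVecLin) := by
      rw [← F.aug_exact]; exact hy
    obtain ⟨x, hx⟩ := this
    exact ⟨x, hx⟩
  | (j+1) =>
    have : y ∈ LinearMap.range ((F.A (j+1)).mulVecLin) := by
      rw [← F.is_exact j]; exact hy
    obtain ⟨x, hx⟩ := this
    exact ⟨x, hx⟩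

/-- the state at step `i` of the comparison-map construction. -/
def StP (i : ℕ) :=
  {φ : Matrix (Fin (F.b i)) (Fin (bM P (i+1))) (MvPolynomial σ K) //
    (∀ k l, (φ k l).IsHomogeneous 1) ∧
    ∀ l, KerC F i (fun k => (φ * AM P (i+1)) k l)}

variable (hF : ∀ i k, F.dg i k = i + d) (hPdg : ∀ i k, P.dg i k = i + 1)
  (hu : u.IsHomogeneous d)

/-- base step: `φ₀` with `aug_F ∘ φ₀ = u · aug_M`. -/
noncomputable def st0D :
    {s : StP P F 0 // ∀ l, Fintype.linearCombination (MvPolynomial σ K)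
        F.g (fun k => s.1 k l) = u * P.g l} := by
  classical
  have hcol : ∀ l : Fin (bM P 1), ∃ x : Fin (F.b 0) → MvPolynomial σ K,
      (Matrix.of fun (_ : Fin 1) k => F.g k).mulVec x = (fun _ => u * P.g l) ∧
      ∀ k, (x k).IsHomogeneous 1 := by
    intro l
    have hgl : P.g l ∈ Submodule.colon J (Ideal.span {u}) := by
      have hmem : P.g l ∈ LinearMap.range (Fintype.linearCombination (MvPolynomial σ K)
          P.g) :=
        ⟨Pi.single l 1, by simp [Fintype.linearCombination_apply, Pi.single_apply]⟩
      rwa [P.aug_range] at hmem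
    have hugl : u * P.g l ∈ J := by
      have := Ideal.mem_colon_span_singleton.mp hgl
      rwa [mul_comm] at this
    have : u * P.g l ∈ LinearMap.range (Fintype.linearCombination (MvPolynomial σ K)
        F.g) := by rw [F.aug_range]; exact hugl
    obtain ⟨x, hx⟩ := this
    refine exists_homog_preimage _ (fun _ k => gF_hom F hF k) (fun _ => ?_) ⟨x, ?_⟩
    · have h1 : (u * P.g l).IsHomogeneous (d + 1) := by
        refine hu.mul ?_
        have := P.g_hom l
        rwa [hPdg 0 l] at this
      have e : 1 + d = d + 1 := by omega
      rwa [e]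
    · funext k
      show ∑ j, F.g j * x j = u * P.g l
      rw [← lincomb_eq_sum_mul, hx]
  choose xc hxc1 hxc2 using hcol
  refine ⟨⟨Matrix.of fun k l => xc l k, fun k l => hxc2 l k, ?_⟩, ?_⟩
  · -- kernel condition for the next step
    intro l
    show Fintype.linearCombination (MvPolynomial σ K) F.g
      (fun k => ((Matrix.of fun k l => xc l k) * AM P 1) k l) = 0
    have hcols : ∀ j, Fintype.linearCombination (MvPolynomial σ K) F.g
        (fun k => (Matrix.of fun k l => xc l k) k j) = u * P.g j := by
      intro j
      have := congrFun (hxc1 j) ⟨0, Nat.zero_lt_one⟩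
      rw [lincomb_eq_sum_mul]
      exact this
    have hcoleq : (fun k => ((Matrix.of fun k l => xc l k) * AM P 1) k l)
        = (Matrix.of fun k l => xc l k).mulVec (fun j => (AM P 1) j l) := (mulVec_col _ _ l).symm
    rw [hcoleq, lincomb_mulVec]
    have hterm : ∀ j, (AM P 1) j l * (Fintype.linearCombination (MvPolynomial σ K)
        F.g (fun k => (Matrix.of fun k l => xc l k) k j))
        = u * (P.g j * (AM P 1) j l) := by
      intro j
      rw [hcols j]; ring
    rw [Finset.sum_congr rfl (fun j _ => hterm j), ← Finset.mul_sum]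
    have hz : ∑ j, P.g j * (AM P 1) j l = 0 := by
      have h0 : (AM P 0).mulVec ((AM P 1).mulVec (Pi.single l 1)) = 0 := AM_comp_vec P 0 _
      rw [Matrix.mulVec_single_one] at h0
      have h1 : (AM P 0).mulVec (fun j => AM P 1 j l) = 0 := h0
      exact congrFun h1 ⟨0, Nat.zero_lt_one⟩
    rw [hz, mul_zero]
  · intro l
    have := congrFun (hxc1 l) ⟨0, Nat.zero_lt_one⟩
    rw [lincomb_eq_sum_mul]
    exact this

/-- inductive step of the comparison-map construction. -/
noncomputable def stepD (i : ℕ) (s : StP P F i) :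
    {q : StP P F (i+1) // F.A i * q.1 = s.1 * AM P (i+1)} := by
  classical
  have hcol : ∀ l : Fin (bM P (i+2)), ∃ x : Fin (F.b (i+1)) → MvPolynomial σ K,
      (F.A i).mulVec x = (fun k => (s.1 * AM P (i+1)) k l) ∧
      ∀ k, (x k).IsHomogeneous 1 := by
    intro l
    refine exists_homog_preimage (m := 1) (c := 1) _ (AF_hom F hF i) (fun k => ?_)
      (exactF F i _ (s.2.2 l))
    · show ((s.1 * AM P (i+1)) k l).IsHomogeneous 2
      rw [Matrix.mul_apply]
      refine MvPolynomial.IsHomogeneous.sum _ _ _ (fun j _ => ?_)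
      exact (s.2.1 k j).mul (AM_hom P hPdg (i+1) j l)
  choose xc hxc1 hxc2 using hcol
  have hchain : F.A i * (Matrix.of fun k l => xc l k) = s.1 * AM P (i+1) := by
    refine Matrix.ext fun k l => ?_
    have h1 : (F.A i).mulVec (fun j => (Matrix.of fun k l => xc l k) j l)
        = fun k => ((F.A i) * (Matrix.of fun k l => xc l k)) k l := mulVec_col _ _ l
    have h2 : (fun j => (Matrix.of fun k l => xc l k) j l) = xc l := rfl
    rw [h2, hxc1 l] at h1
    exact (congrFun h1 k).symm
  refine ⟨⟨Matrix.of fun k l => xc l k, fun k l => hxc2 l k, ?_⟩, hchain⟩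
  intro l
  have h1 : (F.A i).mulVec (fun k => ((Matrix.of fun k l => xc l k) * AM P (i+2)) k l)
      = fun k' => ((F.A i) * ((Matrix.of fun k l => xc l k) * AM P (i+2))) k' l :=
    mulVec_col _ _ l
  have h2 : (F.A i) * ((Matrix.of fun k l => xc l k) * AM P (i+2)) = 0 := by
    rw [← Matrix.mul_assoc, hchain, Matrix.mul_assoc, AM_compM P (i+1), Matrix.mul_zero]
  show (F.A i).mulVec (fun k => ((Matrix.of fun k l => xc l k) * AM P (i+2)) k l) = 0
  rw [h1, h2]
  funext k'
  simp

/-- the full comparison map. -/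
noncomputable def PhiD : ∀ i, StP P F i := fun i =>
  Nat.rec (st0D P F hF hPdg hu).1 (fun i s => (stepD P F hF hPdg i s).1) i

theorem Phi_chain (i : ℕ) :
    F.A i * (PhiD P F hF hPdg hu (i+1)).1
      = (PhiD P F hF hPdg hu i).1 * AM P (i+1) :=
  (stepD P F hF hPdg i (PhiD P F hF hPdg hu i)).2

theorem Phi_aug : ∀ l, Fintype.linearCombination (MvPolynomial σ K)
    F.g (fun k => (PhiD P F hF hPdg hu 0).1 k l) = u * P.g l :=
  (st0D P F hF hPdg hu).2

theorem Phi_hom (i : ℕ) : ∀ k l, ((PhiD P F hF hPdg hu i).1 k l).IsHomogeneous 1 :=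
  (PhiD P F hF hPdg hu i).2.1

theorem Phi_chain_vec (i : ℕ) (x : Fin (bM P (i+2)) → MvPolynomial σ K) :
    (F.A i).mulVec ((PhiD P F hF hPdg hu (i+1)).1.mulVec x)
      = (PhiD P F hF hPdg hu i).1.mulVec ((AM P (i+1)).mulVec x) := by
  rw [Matrix.mulVec_mulVec, Matrix.mulVec_mulVec, Phi_chain]

theorem Phi_aug_vec (x : Fin (bM P 1) → MvPolynomial σ K) :
    Fintype.linearCombination (MvPolynomial σ K) F.g
      ((PhiD P F hF hPdg hu 0).1.mulVec x)
      = u * (((AM P 0).mulVec x) ⟨0, Nat.zero_lt_one⟩) := by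
  rw [lincomb_mulVec]
  have : ∀ l, x l * (Fintype.linearCombination (MvPolynomial σ K) F.g
      (fun k => (PhiD P F hF hPdg hu 0).1 k l)) = u * (P.g l * x l) := by
    intro l
    rw [Phi_aug P F hF hPdg hu l]; ring
  rw [Finset.sum_congr rfl (fun l _ => this l), ← Finset.mul_sum]
  rfl

end ConeAux
namespace ConeAux

variable {K : Type} [Field K] {σ : Type} {J : Ideal (MvPolynomial σ K)} {d : ℕ}
  {u : MvPolynomial σ K}
  (P : MinFreeRes (Submodule.colon J (Ideal.span {u}))) (F : MinFreeRes J)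
  (hF : ∀ i k, F.dg i k = i + d) (hPdg : ∀ i k, P.dg i k = i + 1)
  (hu : u.IsHomogeneous d)

/-- ranks of the cone. -/
abbrev bG : ℕ → ℕ := fun i => F.b i + bM P i

/-- index equivalence. -/
abbrev eqvG (i : ℕ) : Fin (F.b i) ⊕ Fin (bM P i) ≃ Fin (bG P F i) := finSumFinEquiv

/-- generators of the cone. -/
def gG : Fin (bG P F 0) → MvPolynomial σ K :=
  fun k => Sum.elim F.g (fun _ => u) ((eqvG P F 0).symm k)

/-- differentials of the cone. -/
noncomputable def AG (i : ℕ) : Matrix (Fin (bG P F i)) (Fin (bG P F (i+1))) (MvPolynomial σ K) :=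
  (Matrix.fromBlocks (F.A i) ((PhiD P F hF hPdg hu i).1) 0 (-(AM P i))).submatrix
    ⇑(eqvG P F i).symm ⇑(eqvG P F (i+1)).symm

theorem AG_mulVec (i : ℕ) (x : Fin (bG P F (i+1)) → MvPolynomial σ K) :
    (AG P F hF hPdg hu i).mulVec x
      = (Sum.elim
          ((F.A i).mulVec (fun j => x (eqvG P F (i+1) (Sum.inl j)))
            + ((PhiD P F hF hPdg hu i).1).mulVec (fun j => x (eqvG P F (i+1) (Sum.inr j))))
          (-((AM P i).mulVec (fun j => x (eqvG P F (i+1) (Sum.inr j)))))) ∘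
        ⇑(eqvG P F i).symm := by
  rw [AG, Matrix.submatrix_mulVec_equiv]
  have hx : x ∘ ⇑((eqvG P F (i+1)).symm).symm
      = Sum.elim (fun j => x (eqvG P F (i+1) (Sum.inl j)))
          (fun j => x (eqvG P F (i+1) (Sum.inr j))) := by
    funext s
    cases s <;> simp
  rw [hx, Matrix.fromBlocks_mulVec]
  simp only [Sum.elim_comp_inl, Sum.elim_comp_inr, Matrix.zero_mulVec, Matrix.neg_mulVec,
    zero_add]

theorem AG_top (i : ℕ) (x : Fin (bG P F (i+1)) → MvPolynomial σ K) (k : Fin (F.b i)) :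
    (AG P F hF hPdg hu i).mulVec x (eqvG P F i (Sum.inl k))
      = (F.A i).mulVec (fun j => x (eqvG P F (i+1) (Sum.inl j))) k
        + ((PhiD P F hF hPdg hu i).1).mulVec (fun j => x (eqvG P F (i+1) (Sum.inr j))) k := by
  rw [AG_mulVec]
  simp

theorem AG_bot (i : ℕ) (x : Fin (bG P F (i+1)) → MvPolynomial σ K) (k : Fin (bM P i)) :
    (AG P F hF hPdg hu i).mulVec x (eqvG P F i (Sum.inr k))
      = -((AM P i).mulVec (fun j => x (eqvG P F (i+1) (Sum.inr j))) k) := by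
  rw [AG_mulVec]
  simp

theorem augG_eq (x : Fin (bG P F 0) → MvPolynomial σ K) :
    Fintype.linearCombination (MvPolynomial σ K) (gG P F) x
      = Fintype.linearCombination (MvPolynomial σ K) F.g
          (fun j => x (eqvG P F 0 (Sum.inl j)))
        + (∑ j : Fin (bM P 0), x (eqvG P F 0 (Sum.inr j))) * u := by
  rw [Fintype.linearCombination_apply,
    ← Equiv.sum_comp (eqvG P F 0) (fun k => x k • gG P F k), Fintype.sum_sum_type]
  congr 1
  · rw [Fintype.linearCombination_apply]
    refine Finset.sum_congr rfl fun j _ => ?_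
    simp [gG]
  · rw [Finset.sum_mul]
    refine Finset.sum_congr rfl fun j _ => ?_
    simp [gG, smul_eq_mul]

end ConeAux
open ConeAux in
/-- The mapping cone lemma: if `J` has a `d`-linear resolution, `u` is homogeneous of
degree `d`, and the colon ideal `J : u` has a `1`-linear resolution, then `J + (u)`
has a `d`-linear resolution. -/
theorem cone_lemma {K : Type} [Field K] {σ : Type} {J : Ideal (MvPolynomial σ K)} {d : ℕ}
    {u : MvPolynomial σ K} (hu : u.IsHomogeneous d) (hJ : HasLinRes J d)
    (hP : HasLinRes (Submodule.colon J (Ideal.span {u})) 1) :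
    HasLinRes (J ⊔ Ideal.span {u}) d := by
  classical
  obtain ⟨F, hF⟩ := hJ
  obtain ⟨P, hPdg⟩ := hP
  haveI huniq : Unique (Fin (bM P 0)) := by
    have h1 : bM P 0 = 1 := rfl
    rw [h1]
    infer_instance
  have hsum : ∀ (f : Fin (bM P 0) → MvPolynomial σ K) (j : Fin (bM P 0)),
      (∑ j', f j') = f j := by
    intro f j
    have huniv : (Finset.univ : Finset (Fin (bM P 0))) = {j} :=
      Finset.eq_singleton_iff_unique_mem.mpr ⟨Finset.mem_univ _, fun b _ => Subsingleton.elim b j⟩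
    rw [huniv, Finset.sum_singleton]
  refine ⟨{ b := bG P F
            dg := fun i _ => i + d
            g := gG P F
            A := AG P F hF hPdg hu
            g_hom := ?_
            A_hom := ?_
            aug_range := ?_
            aug_exact := ?_
            is_exact := ?_ }, fun i k => rfl⟩
  · -- g_hom
    intro k
    show ((gG P F) k).IsHomogeneous (0 + d)
    rw [Nat.zero_add, gG]
    rcases hs : (eqvG P F 0).symm k with j | j
    · exact gF_hom F hF j
    · exact hu
  · -- A_hom
    intro i k l
    refine Or.inr ⟨?_, by show i + d < i + 1 + d; omega⟩
    have e : (i+1) + d - (i + d) = 1 := by omega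
    show ((AG P F hF hPdg hu i) k l).IsHomogeneous ((i+1) + d - (i + d))
    rw [e]
    show ((Matrix.fromBlocks (F.A i) ((PhiD P F hF hPdg hu i).1) 0
      (-(AM P i))) ((eqvG P F i).symm k) ((eqvG P F (i+1)).symm l)).IsHomogeneous 1
    rcases (eqvG P F i).symm k with k' | k' <;> rcases (eqvG P F (i+1)).symm l with l' | l'
    · exact AF_hom F hF i k' l'
    · exact Phi_hom P F hF hPdg hu i k' l'
    · show ((0 : Matrix _ _ (MvPolynomial σ K)) k' l').IsHomogeneous 1
      rw [Matrix.zero_apply]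
      exact MvPolynomial.isHomogeneous_zero _ _ _
    · show ((-(AM P i)) k' l').IsHomogeneous 1
      rw [Matrix.neg_apply]
      exact (AM_hom P hPdg i k' l').neg
  · -- aug_range
    apply le_antisymm
    · rintro x ⟨y, rfl⟩
      rw [augG_eq]
      refine Submodule.add_mem_sup ?_ ?_
      · have hmem : Fintype.linearCombination (MvPolynomial σ K) F.g
            (fun j => y (eqvG P F 0 (Sum.inl j))) ∈ LinearMap.range
              (Fintype.linearCombination (MvPolynomial σ K) F.g) :=
          ⟨_, rfl⟩
        rwa [F.aug_range] at hmem
      · exact Ideal.mem_span_singleton'.mpr ⟨_, rfl⟩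
    · apply sup_le
      · intro z hz
        rw [← F.aug_range] at hz
        obtain ⟨yF, hyF⟩ := hz
        refine ⟨fun k => Sum.elim yF (fun _ => 0) ((eqvG P F 0).symm k), ?_⟩
        rw [augG_eq]
        simp only [Equiv.symm_apply_apply, Sum.elim_inl, Sum.elim_inr]
        rw [hyF]
        simp
      · intro z hz
        obtain ⟨a, ha⟩ := Ideal.mem_span_singleton'.mp hz
        refine ⟨fun k => Sum.elim (fun _ => 0) (fun _ => a) ((eqvG P F 0).symm k), ?_⟩
        rw [augG_eq]
        simp only [Equiv.symm_apply_apply, Sum.elim_inl, Sum.elim_inr]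
        rw [hsum (fun _ => a) ⟨0, Nat.zero_lt_one⟩]
        have h0 : Fintype.linearCombination (MvPolynomial σ K) F.g
            (fun _ => (0 : MvPolynomial σ K)) = 0 := by
          simp [Fintype.linearCombination_apply]
        rw [h0, zero_add, ha]
  · -- aug_exact
    apply le_antisymm
    · intro x hx
      rw [LinearMap.mem_ker, augG_eq] at hx
      have haJ : Fintype.linearCombination (MvPolynomial σ K) F.g
          (fun j => x (eqvG P F 0 (Sum.inl j))) ∈ J := by
        have hmem : Fintype.linearCombination (MvPolynomial σ K) F.g
            (fun j => x (eqvG P F 0 (Sum.inl j))) ∈ LinearMap.range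
              (Fintype.linearCombination (MvPolynomial σ K) F.g) :=
          ⟨_, rfl⟩
        rwa [F.aug_range] at hmem
      have hcu : (∑ j : Fin (bM P 0), x (eqvG P F 0 (Sum.inr j))) * u ∈ J := by
        rw [eq_neg_of_add_eq_zero_right hx]
        exact J.neg_mem haJ
      obtain ⟨m₁, hm₁⟩ := colon_to_M P _ (Ideal.mem_colon_span_singleton.mpr hcu)
      have hxMc : (fun j => x (eqvG P F 0 (Sum.inr j)))
          = fun _ => ∑ j : Fin (bM P 0), x (eqvG P F 0 (Sum.inr j)) := by
        funext j
        exact (hsum (fun j' => x (eqvG P F 0 (Sum.inr j'))) j).symm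
      have hm₁' : (AM P 0).mulVec m₁ = fun j => x (eqvG P F 0 (Sum.inr j)) := by
        rw [hm₁]
        exact hxMc.symm
      have hfk : Fintype.linearCombination (MvPolynomial σ K) F.g
          ((fun j => x (eqvG P F 0 (Sum.inl j)))
            + (PhiD P F hF hPdg hu 0).1.mulVec m₁) = 0 := by
        rw [map_add, Phi_aug_vec P F hF hPdg hu m₁]
        have h2 : ((AM P 0).mulVec m₁) ⟨0, Nat.zero_lt_one⟩
            = ∑ j : Fin (bM P 0), x (eqvG P F 0 (Sum.inr j)) := by
          rw [hm₁]
        rw [h2, mul_comm]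
        exact hx
      have hrange : ((fun j => x (eqvG P F 0 (Sum.inl j)))
          + (PhiD P F hF hPdg hu 0).1.mulVec m₁) ∈ LinearMap.range ((F.A 0).mulVecLin) := by
        rw [← F.aug_exact]
        exact hfk
      obtain ⟨f₁, hf₁⟩ := hrange
      rw [Matrix.mulVecLin_apply] at hf₁
      refine ⟨fun k' => Sum.elim f₁ (fun j => -(m₁ j)) ((eqvG P F 1).symm k'), ?_⟩
      rw [Matrix.mulVecLin_apply]
      funext k'
      obtain ⟨s, rfl⟩ := (eqvG P F 0).surjective k'
      have hyF : (fun j => (fun k' => Sum.elim f₁ (fun j => -(m₁ j)) ((eqvG P F 1).symm k'))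
          (eqvG P F 1 (Sum.inl j))) = f₁ := by funext j; simp
      have hyM : (fun j => (fun k' => Sum.elim f₁ (fun j => -(m₁ j)) ((eqvG P F 1).symm k'))
          (eqvG P F 1 (Sum.inr j))) = -m₁ := by funext j; simp
      cases s with
      | inl k =>
        rw [AG_top, hyF, hyM, Matrix.mulVec_neg]
        have h2 := congrFun hf₁ k
        simp only [Pi.add_apply] at h2
        simp only [Pi.neg_apply]
        rw [h2]
        ring
      | inr k =>
        rw [AG_bot, hyM, Matrix.mulVec_neg]
        simp only [Pi.neg_apply, neg_neg]
        rw [hm₁']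
    · rintro x ⟨y, rfl⟩
      rw [LinearMap.mem_ker, Matrix.mulVecLin_apply, augG_eq]
      have hzF : (fun j => ((AG P F hF hPdg hu 0).mulVec y) (eqvG P F 0 (Sum.inl j)))
          = (F.A 0).mulVec (fun j => y (eqvG P F 1 (Sum.inl j)))
            + (PhiD P F hF hPdg hu 0).1.mulVec (fun j => y (eqvG P F 1 (Sum.inr j))) := by
        funext j
        rw [AG_top]
        rfl
      have hzM : ∀ j, ((AG P F hF hPdg hu 0).mulVec y) (eqvG P F 0 (Sum.inr j))
          = -(((AM P 0).mulVec (fun j => y (eqvG P F 1 (Sum.inr j)))) j) := by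
        intro j
        rw [AG_bot]
      rw [hzF, map_add]
      have h1 : Fintype.linearCombination (MvPolynomial σ K) F.g
          ((F.A 0).mulVec (fun j => y (eqvG P F 1 (Sum.inl j)))) = 0 := by
        have hmem : (F.A 0).mulVecLin (fun j => y (eqvG P F 1 (Sum.inl j)))
            ∈ LinearMap.range ((F.A 0).mulVecLin) := ⟨_, rfl⟩
        rw [← F.aug_exact] at hmem
        rw [← Matrix.mulVecLin_apply]
        exact hmem
      rw [h1, Phi_aug_vec P F hF hPdg hu, Finset.sum_congr rfl (fun j _ => hzM j)]
      rw [hsum (fun j => -(((AM P 0).mulVec (fun j => y (eqvG P F 1 (Sum.inr j)))) j))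
        ⟨0, Nat.zero_lt_one⟩]
      ring
  · -- is_exact
    intro i
    apply le_antisymm
    · intro x hx
      rw [LinearMap.mem_ker, Matrix.mulVecLin_apply] at hx
      have htop : ∀ k, ((F.A i).mulVec (fun j => x (eqvG P F (i+1) (Sum.inl j)))) k
          + ((PhiD P F hF hPdg hu i).1.mulVec (fun j => x (eqvG P F (i+1) (Sum.inr j)))) k
          = 0 := by
        intro k
        have h := congrFun hx (eqvG P F i (Sum.inl k))
        rw [AG_top] at h
        exact h
      have hbot : (AM P i).mulVec (fun j => x (eqvG P F (i+1) (Sum.inr j))) = 0 := by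
        funext k
        have h := congrFun hx (eqvG P F i (Sum.inr k))
        rw [AG_bot] at h
        simpa [neg_eq_zero] using h
      obtain ⟨m₂, hm₂⟩ := AM_exact P i _ hbot
      have hker : KerC F (i+1) ((fun j => x (eqvG P F (i+1) (Sum.inl j)))
          + (PhiD P F hF hPdg hu (i+1)).1.mulVec m₂) := by
        show (F.A i).mulVec _ = 0
        rw [Matrix.mulVec_add, Phi_chain_vec P F hF hPdg hu i m₂, hm₂]
        funext k
        simp only [Pi.add_apply, Pi.zero_apply]
        exact htop k
      obtain ⟨f₂, hf₂⟩ := exactF F (i+1) _ hker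
      refine ⟨fun k' => Sum.elim f₂ (fun j => -(m₂ j)) ((eqvG P F (i+2)).symm k'), ?_⟩
      rw [Matrix.mulVecLin_apply]
      funext k'
      obtain ⟨s, rfl⟩ := (eqvG P F (i+1)).surjective k'
      have hyF : (fun j => (fun k' => Sum.elim f₂ (fun j => -(m₂ j)) ((eqvG P F (i+2)).symm k'))
          (eqvG P F (i+2) (Sum.inl j))) = f₂ := by funext j; simp
      have hyM : (fun j => (fun k' => Sum.elim f₂ (fun j => -(m₂ j)) ((eqvG P F (i+2)).symm k'))
          (eqvG P F (i+2) (Sum.inr j))) = -m₂ := by funext j; simp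
      cases s with
      | inl k =>
        rw [AG_top, hyF, hyM, Matrix.mulVec_neg]
        have h2 := congrFun hf₂ k
        simp only [Pi.add_apply] at h2
        simp only [Pi.neg_apply]
        rw [h2]
        ring
      | inr k =>
        rw [AG_bot, hyM, Matrix.mulVec_neg]
        simp only [Pi.neg_apply, neg_neg]
        rw [hm₂]
    · rintro x ⟨y, rfl⟩
      rw [LinearMap.mem_ker, Matrix.mulVecLin_apply, Matrix.mulVecLin_apply]
      funext k'
      obtain ⟨s, rfl⟩ := (eqvG P F i).surjective k'
      have hzF : (fun j => ((AG P F hF hPdg hu (i+1)).mulVec y) (eqvG P F (i+1) (Sum.inl j)))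
          = (F.A (i+1)).mulVec (fun j => y (eqvG P F (i+2) (Sum.inl j)))
            + (PhiD P F hF hPdg hu (i+1)).1.mulVec (fun j => y (eqvG P F (i+2) (Sum.inr j))) := by
        funext j
        rw [AG_top]
        rfl
      have hzM : (fun j => ((AG P F hF hPdg hu (i+1)).mulVec y) (eqvG P F (i+1) (Sum.inr j)))
          = -((AM P (i+1)).mulVec (fun j => y (eqvG P F (i+2) (Sum.inr j)))) := by
        funext j
        rw [AG_bot]
        rfl
      cases s with
      | inl k =>
        rw [AG_top, hzF, hzM, Matrix.mulVec_add, Matrix.mulVec_neg,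
          AF_comp_vec F i, Phi_chain_vec P F hF hPdg hu i]
        simp
      | inr k =>
        rw [AG_bot, hzM, Matrix.mulVec_neg, AM_comp_vec P i]
        simp
section PartB5

variable {K : Type} [Field K] {σ : Type}

open MvPolynomial in
theorem sub_aeval_mem (A : Set σ) [DecidablePred (· ∈ A)] (f : MvPolynomial σ K) :
    f - MvPolynomial.aeval (fun i => if i ∈ A then 0 else MvPolynomial.X i) f
      ∈ Ideal.span ((fun i => (MvPolynomial.X i : MvPolynomial σ K)) '' A) := by
  induction f using MvPolynomial.induction_on with
  | C a => simp
  | add p q hp hq =>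
    rw [map_add]
    have heq : p + q - (MvPolynomial.aeval (fun i => if i ∈ A then 0 else X i) p
        + MvPolynomial.aeval (fun i => if i ∈ A then 0 else X i) q)
        = (p - MvPolynomial.aeval (fun i => if i ∈ A then 0 else X i) p)
          + (q - MvPolynomial.aeval (fun i => if i ∈ A then 0 else X i) q) := by ring
    rw [heq]
    exact Ideal.add_mem _ hp hq
  | mul_X p i hp =>
    rw [map_mul, MvPolynomial.aeval_X]
    by_cases hi : i ∈ A
    · rw [if_pos hi, mul_zero, sub_zero]
      exact Ideal.mul_mem_left _ _ (Ideal.subset_span ⟨i, hi, rfl⟩)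
    · rw [if_neg hi]
      have heq : p * X i - MvPolynomial.aeval (fun i => if i ∈ A then 0 else X i) p * X i
          = (p - MvPolynomial.aeval (fun i => if i ∈ A then 0 else X i) p) * X i := by ring
      rw [heq]
      exact Ideal.mul_mem_right _ _ hp

open MvPolynomial in
theorem span_vars_colon {A : Set σ} {a : σ} (ha : a ∉ A) :
    Submodule.colon (Ideal.span ((fun i => (X i : MvPolynomial σ K)) '' A))
        (Ideal.span {(X a : MvPolynomial σ K)})
      = Ideal.span ((fun i => (X i : MvPolynomial σ K)) '' A) := by
  classical
  apply le_antisymm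
  · intro f hf
    have hfa : f * X a ∈ Ideal.span ((fun i => (X i : MvPolynomial σ K)) '' A) :=
      Ideal.mem_colon_span_singleton.mp hf
    set π := MvPolynomial.aeval (R := K) (fun i => if i ∈ A then 0 else (X i : MvPolynomial σ K))
      with hπ
    have hker : ∀ g ∈ Ideal.span ((fun i => (X i : MvPolynomial σ K)) '' A), π g = 0 := by
      intro g hg
      have hle : Ideal.span ((fun i => (X i : MvPolynomial σ K)) '' A)
          ≤ RingHom.ker (π : MvPolynomial σ K →+* MvPolynomial σ K) := by
        rw [Ideal.span_le]
        rintro _ ⟨s, hs, rfl⟩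
        show π (X s) = 0
        rw [hπ, MvPolynomial.aeval_X, if_pos hs]
      exact hle hg
    have hπf : π f = 0 := by
      have h1 : π (f * X a) = 0 := hker _ hfa
      rw [map_mul, hπ, MvPolynomial.aeval_X, if_neg ha] at h1
      rcases mul_eq_zero.mp h1 with h | h
      · exact h
      · exact absurd h (MvPolynomial.X_ne_zero a)
    have := sub_aeval_mem (K := K) A f
    rw [← hπ, hπf, sub_zero] at this
    exact this
  · intro f hf
    exact Ideal.mem_colon_span_singleton.mpr (Ideal.mul_mem_right _ _ hf)

open MvPolynomial in
theorem vars_hasLinRes [DecidableEq σ] (B : Finset σ) :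
    HasLinRes (Ideal.span ((fun i => (X i : MvPolynomial σ K)) '' (B : Set σ))) 1 := by
  induction B using Finset.induction_on with
  | empty =>
    refine hasLinRes_congr ?_ (hasLinRes_bot 1)
    simp
  | @insert a B' ha ih =>
    have hcoe : ((insert a B' : Finset σ) : Set σ) = insert a (B' : Set σ) := by
      simp
    have hspan : Ideal.span ((fun i => (X i : MvPolynomial σ K)) '' ((insert a B' : Finset σ) : Set σ))
        = Ideal.span ((fun i => (X i : MvPolynomial σ K)) '' (B' : Set σ))
          ⊔ Ideal.span {(X a : MvPolynomial σ K)} := by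
      rw [hcoe, Set.image_insert_eq, Ideal.span_insert]
      rw [sup_comm]
    refine hasLinRes_congr hspan.symm ?_
    refine cone_lemma (isHomogeneous_X K a) ih ?_
    rw [span_vars_colon (by simpa using ha)]
    exact ih

open MvPolynomial in
theorem genByVars_hasLinRes {n : ℕ} {P : Ideal (MvPolynomial (Fin n) K)}
    (h : genByVars P) : HasLinRes P 1 := by
  classical
  obtain ⟨A, hA⟩ := h
  have hfin : A.Finite := Set.toFinite A
  have : A = (hfin.toFinset : Set (Fin n)) := (Set.Finite.coe_toFinset hfin).symm
  rw [hA, this]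
  exact vars_hasLinRes hfin.toFinset

end PartB5
section PartC0

variable {K : Type} [Field K]

theorem mdeg_mono {n : ℕ} {t M : Fin n →₀ ℕ} (h : t ≤ M) : mdeg t ≤ mdeg M := by
  rw [mdeg_eq_sum_univ, mdeg_eq_sum_univ]
  exact Finset.sum_le_sum fun i _ => Finsupp.le_def.mp h i

theorem mdeg_lt_of_ne {n : ℕ} {t M : Fin n →₀ ℕ} (h : t ≤ M) (hne : t ≠ M) :
    mdeg t < mdeg M := by
  rw [mdeg_eq_sum_univ, mdeg_eq_sum_univ]
  refine Finset.sum_lt_sum (fun i _ => Finsupp.le_def.mp h i) ?_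
  by_contra hc
  push_neg at hc
  apply hne
  ext i
  exact le_antisymm (Finsupp.le_def.mp h i) (hc i (Finset.mem_univ i))

theorem mdeg_single {σ : Type} (s : σ) : mdeg (Finsupp.single s (1:ℕ)) = 1 := by
  simp [mdeg, Finsupp.sum_single_index]

theorem eq_of_le_of_mdeg_eq {n : ℕ} {t M : Fin n →₀ ℕ} (h : t ≤ M)
    (hd : mdeg t = mdeg M) : t = M := by
  by_contra hne
  exact absurd hd (Nat.ne_of_lt (mdeg_lt_of_ne h hne))

theorem finite_Wset {n : ℕ} (j : ℕ) (u : Fin n →₀ ℕ) :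
    {w : Fin n →₀ ℕ | mdeg w = j ∧ u ≤ w}.Finite :=
  (finite_mdeg_le j).subset fun w hw => le_of_eq hw.1

/-- the engine: adding a finite set of degree-`j` monomial generators whose
lex-ordered colon ideals are generated by variables preserves linear resolutions. -/
theorem engine {n : ℕ} (j : ℕ) (W : Finset (Fin n →₀ ℕ)) :
    ∀ (L : Ideal (MvPolynomial (Fin n) K)), HasLinRes L j →
    (∀ w ∈ W, mdeg w = j) →
    (∀ w ∈ W,
      mon K w ∉ L ⊔ monIdeal K {w' | w' ∈ W ∧ toLex w < toLex w'} →
      genByVars (Submodule.colon (L ⊔ monIdeal K {w' | w' ∈ W ∧ toLex w < toLex w'})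
        (Ideal.span {mon K w}))) →
    HasLinRes (L ⊔ monIdeal K (W : Set (Fin n →₀ ℕ))) j := by
  classical
  generalize hcard : W.card = N
  induction N generalizing W with
  | zero =>
    intro L hL _ _
    have hW : W = ∅ := Finset.card_eq_zero.mp hcard
    subst hW
    refine hasLinRes_congr ?_ hL
    rw [Finset.coe_empty, monIdeal_empty]
    simp
  | succ N ih =>
    intro L hL hdeg hcolon
    have hne : W.Nonempty := Finset.card_pos.mp (by omega)
    have hTne : (W.image toLex).Nonempty := hne.image _
    set m₀ := (W.image toLex).min' hTne with hm₀
    have hm₀W : ofLex m₀ ∈ W := by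
      have := (W.image toLex).min'_mem hTne
      rw [← hm₀] at this
      obtain ⟨w, hw, hww⟩ := Finset.mem_image.mp this
      rwa [← hww]
    set w₁ := ofLex m₀ with hw₁
    have hmin : ∀ w ∈ W, w ≠ w₁ → toLex w₁ < toLex w := by
      intro w hw hwne
      refine lt_of_le_of_ne ?_ ?_
      · show m₀ ≤ toLex w
        exact (W.image toLex).min'_le _ (Finset.mem_image_of_mem _ hw)
      · intro he
        exact hwne (toLex.injective (show toLex w = toLex w₁ from he.symm))
    set W' := W.erase w₁ with hW'
    have hWins : W = insert w₁ W' := (Finset.insert_erase hm₀W).symm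
    have hset : {w' | w' ∈ W ∧ toLex w₁ < toLex w'} = (W' : Set (Fin n →₀ ℕ)) := by
      ext w'
      simp only [Set.mem_setOf_eq, Finset.coe_erase, Set.mem_diff, Finset.mem_coe,
        Set.mem_singleton_iff, hW']
      constructor
      · rintro ⟨hw, hlt⟩
        refine ⟨hw, fun he => ?_⟩
        rw [he] at hlt
        exact lt_irrefl _ hlt
      · rintro ⟨hw, hne'⟩
        exact ⟨hw, hmin w' hw hne'⟩
    have hsets : ∀ w ∈ W', {w' | w' ∈ W' ∧ toLex w < toLex w'}
        = {w' | w' ∈ W ∧ toLex w < toLex w'} := by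
      intro w hw
      ext w'
      simp only [Set.mem_setOf_eq]
      constructor
      · rintro ⟨hw', hlt⟩
        exact ⟨Finset.mem_of_mem_erase hw', hlt⟩
      · rintro ⟨hw', hlt⟩
        refine ⟨Finset.mem_erase.mpr ⟨fun he => ?_, hw'⟩, hlt⟩
        subst he
        have h1 := hmin w (Finset.mem_of_mem_erase hw) (Finset.ne_of_mem_erase hw)
        exact lt_irrefl _ (h1.trans hlt)
    have hIH : HasLinRes (L ⊔ monIdeal K (W' : Set (Fin n →₀ ℕ))) j := by
      refine ih W' ?_ L hL (fun w hw => hdeg w (Finset.mem_of_mem_erase hw)) ?_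
      · rw [hW', Finset.card_erase_of_mem hm₀W]
        omega
      · intro w hw
        rw [hsets w hw]
        exact hcolon w (Finset.mem_of_mem_erase hw)
    have hWeq : monIdeal K (W : Set (Fin n →₀ ℕ))
        = monIdeal K (W' : Set (Fin n →₀ ℕ)) ⊔ Ideal.span {mon K w₁} := by
      rw [hWins]
      rw [show ((insert w₁ W' : Finset (Fin n →₀ ℕ)) : Set (Fin n →₀ ℕ))
        = (W' : Set (Fin n →₀ ℕ)) ∪ {w₁} by
          rw [Finset.coe_insert, Set.insert_eq, Set.union_comm]]
      rw [monIdeal_union, monIdeal_singleton]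
    have hgoal : L ⊔ monIdeal K (W : Set (Fin n →₀ ℕ))
        = (L ⊔ monIdeal K (W' : Set (Fin n →₀ ℕ))) ⊔ Ideal.span {mon K w₁} := by
      rw [hWeq, sup_assoc]
    by_cases hmem : mon K w₁ ∈ L ⊔ monIdeal K (W' : Set (Fin n →₀ ℕ))
    · refine hasLinRes_congr ?_ hIH
      rw [hgoal, sup_span_singleton_of_mem hmem]
    · have hcol := hcolon w₁ hm₀W
      rw [hset] at hcol
      have hcol2 := hcol hmem
      refine hasLinRes_congr hgoal.symm ?_
      refine cone_lemma ?_ hIH (genByVars_hasLinRes hcol2)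
      have := mon_isHomogeneous (K := K) w₁
      rwa [hdeg w₁ hm₀W] at this

end PartC0
section PartC1

variable {K : Type} [Field K]

/-- one step of the componentwise argument: adding the degree-`j` multiples of a new
monomial generator `u` to the `j`-th component, via the engine. -/
theorem step_component {n : ℕ} (j : ℕ) (SS : Set (Fin n →₀ ℕ)) (u : Fin n →₀ ℕ)
    (hanti : ∀ t ∈ SS, ¬ u ≤ t)
    (hcolS : genByLinForms (Submodule.colon (monIdeal K SS) (Ideal.span {mon K u})))
    (hL : HasLinRes (monIdeal K {m' | mdeg m' = j ∧ ∃ t ∈ SS, t ≤ m'}) j) :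
    HasLinRes (monIdeal K ({m' | mdeg m' = j ∧ ∃ t ∈ SS, t ≤ m'}
      ∪ {w | mdeg w = j ∧ u ≤ w})) j := by
  classical
  set TJ := {m' | mdeg m' = j ∧ ∃ t ∈ SS, t ≤ m'} with hTJ
  have hWfin := finite_Wset j u
  set W := hWfin.toFinset with hWdef
  have hWmem : ∀ w, w ∈ W ↔ (mdeg w = j ∧ u ≤ w) := fun w => Set.Finite.mem_toFinset _
  -- colon ideal of SS by u is generated by variables, with explicit set B
  have hgvS : ∃ B : Set (Fin n), Submodule.colon (monIdeal K SS) (Ideal.span {mon K u})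
      = Ideal.span ((fun i => (MvPolynomial.X i : MvPolynomial (Fin n) K)) '' B) := by
    have h1 := hcolS
    rw [colon_monIdeal] at h1
    have h2 := genByVars_of_monIdeal_genByLinForms h1
    rw [← colon_monIdeal] at h2
    exact h2
  obtain ⟨B, hB⟩ := hgvS
  have hmain := engine (K := K) j W (monIdeal K TJ) hL
    (fun w hw => ((hWmem w).mp hw).1) ?_
  · refine hasLinRes_congr ?_ hmain
    rw [Set.Finite.coe_toFinset, ← monIdeal_union]
  -- the colon condition
  intro mm hmmW hnot
  obtain ⟨hmdeg, humm⟩ := (hWmem mm).mp hmmW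
  set WGT := {w' | w' ∈ W ∧ toLex mm < toLex w'} with hWGT
  have hPR : monIdeal K TJ ⊔ monIdeal K WGT = monIdeal K (TJ ∪ WGT) :=
    (monIdeal_union _ _).symm
  set w0 := mm - u with hw0
  have huw0 : w0 + u = mm := tsub_add_cancel_of_le humm
  -- the key claim
  have hKEY : ∀ z : Fin n →₀ ℕ, z ≠ 0 → mon K (z + mm) ∈ monIdeal K (TJ ∪ WGT) →
      ∃ s, z s ≠ 0 ∧ mon K (mm + Finsupp.single s 1) ∈ monIdeal K (TJ ∪ WGT) := by
    intro z hz hmem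
    obtain ⟨t', ht'U, ht'le⟩ := mon_mem_monIdeal.mp hmem
    rcases ht'U with ht'T | ht'W
    · -- case (a): t' comes from the old component
      obtain ⟨hdt', t, htSS, htt'⟩ := ht'T
      have hzmJ : mon K (z + mm) ∈ monIdeal K SS :=
        mon_mem_monIdeal.mpr ⟨t, htSS, htt'.trans ht'le⟩
      have hcolmem : mon K (z + w0) ∈ Submodule.colon (monIdeal K SS)
          (Ideal.span {mon K u}) := by
        rw [Ideal.mem_colon_span_singleton, mon_mul,
          show z + w0 + u = z + mm by rw [add_assoc, huw0]]
        exact hzmJ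
      rw [hB] at hcolmem
      obtain ⟨s, hsB, hs⟩ := mon_mem_span_X.mp hcolmem
      have hXs : mon K (Finsupp.single s 1 + u) ∈ monIdeal K SS := by
        have hXcol : (MvPolynomial.X s : MvPolynomial (Fin n) K)
            ∈ Submodule.colon (monIdeal K SS) (Ideal.span {mon K u}) := by
          rw [hB]; exact Ideal.subset_span ⟨s, hsB, rfl⟩
        have h3 := Ideal.mem_colon_span_singleton.mp hXcol
        rwa [X_eq_mon, mon_mul] at h3
      have hzws : z s + w0 s ≠ 0 := by
        have h4 := hs
        simp only [Finsupp.coe_add, Pi.add_apply] at h4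
        exact h4
      by_cases hzs : z s = 0
      · -- then u-multiple mm itself was already in the old component: contradiction
        exfalso
        have hw0s : w0 s ≠ 0 := by omega
        have hmmJ : mon K mm ∈ monIdeal K SS := by
          have heq : (w0 - Finsupp.single s 1) + (Finsupp.single s 1 + u) = mm := by
            rw [← add_assoc, tsub_add_cancel_of_le (Finsupp.single_le_iff.mpr (by omega)),
              huw0]
          rw [← heq, ← mon_mul]
          exact Ideal.mul_mem_left _ _ hXs
        obtain ⟨t2, ht2SS, ht2⟩ := mon_mem_monIdeal.mp hmmJ
        apply hnot
        exact Submodule.mem_sup_left (mon_mem_monIdeal.mpr ⟨mm, ⟨hmdeg, t2, ht2SS, ht2⟩,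
          le_refl _⟩)
      · refine ⟨s, hzs, ?_⟩
        have hmmsJ : mon K (mm + Finsupp.single s 1) ∈ monIdeal K SS := by
          have heq : w0 + (Finsupp.single s 1 + u) = mm + Finsupp.single s 1 := by
            rw [← add_assoc, add_right_comm, huw0]
          rw [← heq, ← mon_mul]
          exact Ideal.mul_mem_left _ _ hXs
        obtain ⟨t2, ht2SS, ht2le⟩ := mon_mem_monIdeal.mp hmmsJ
        have hvt : ¬ u ≤ t2 := hanti t2 ht2SS
        have hmdegsum : mdeg (mm + Finsupp.single s 1) = j + 1 := by
          rw [mdeg_add, hmdeg, mdeg_single]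
        have hdeg2 : mdeg t2 ≤ j := by
          by_contra h'
          push_neg at h'
          have h1 : mdeg t2 ≤ j + 1 := by
            have := mdeg_mono ht2le
            omega
          have ht2eq : t2 = mm + Finsupp.single s 1 :=
            eq_of_le_of_mdeg_eq ht2le (by omega)
          apply hvt
          rw [ht2eq]
          exact humm.trans le_self_add
        obtain ⟨q, hq1, hq2, hq3⟩ := interpolate ht2le hdeg2 (by omega)
        exact mon_mem_monIdeal.mpr ⟨q, Or.inl ⟨hq3, t2, ht2SS, hq1⟩, hq2⟩
    · -- case (b): t' is a lex-larger new generator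
      obtain ⟨ht'W', hlt⟩ := ht'W
      obtain ⟨hdt', hut'⟩ := (hWmem t').mp ht'W'
      set w0' := t' - u with hw0'
      have huw0' : w0' + u = t' := tsub_add_cancel_of_le hut'
      have hdw : mdeg w0' = mdeg w0 := by
        have e1 : mdeg w0' + mdeg u = mdeg t' := by rw [← mdeg_add, huw0']
        have e2 : mdeg w0 + mdeg u = mdeg mm := by rw [← mdeg_add, huw0]
        rw [hdt'] at e1
        rw [hmdeg] at e2
        omega
      have hltw : toLex w0 < toLex w0' := by
        rw [← lex_add_right_iff w0 w0' u, huw0, huw0']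
        exact hlt
      have hlew : w0' ≤ z + w0 := by
        have h1 : t' - u ≤ (z + mm) - u := tsub_le_tsub_right ht'le u
        rwa [add_tsub_assoc_of_le humm z, ← hw0', ← hw0] at h1
      obtain ⟨c, ℓ, hzc, hwℓ, hcl, hbelow, hcc⟩ := lex_witness hdw hltw hlew
      refine ⟨c, hzc, ?_⟩
      set m'' := (w0 - Finsupp.single ℓ 1) + Finsupp.single c 1 + u with hm''
      have hsub : (w0 - Finsupp.single ℓ 1) + Finsupp.single ℓ 1 = w0 :=
        tsub_add_cancel_of_le (Finsupp.single_le_iff.mpr (by omega))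
      have hdm'' : mdeg m'' = j := by
        have e1 : mdeg (w0 - Finsupp.single ℓ 1) + 1 = mdeg w0 := by
          have h5 := mdeg_add (w0 - Finsupp.single ℓ 1) (Finsupp.single ℓ 1)
          rw [hsub, mdeg_single] at h5
          omega
        have e2 : mdeg mm = mdeg w0 + mdeg u := by rw [← huw0, mdeg_add]
        have e3 : mdeg m'' = mdeg (w0 - Finsupp.single ℓ 1) + 1 + mdeg u := by
          rw [hm'', mdeg_add, mdeg_add, mdeg_single]
        rw [hmdeg] at e2
        omega
      have hum'' : u ≤ m'' := le_add_self
      have hm''W : m'' ∈ W := (hWmem m'').mpr ⟨hdm'', hum''⟩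
      have hltm'' : toLex mm < toLex m'' := by
        rw [← huw0, hm'', lex_add_right_iff, Finsupp.Lex.lt_iff]
        refine ⟨c, ?_, ?_⟩
        · intro i hi
          have hne1 : ℓ ≠ i := ne_of_gt (lt_trans hi hcl)
          have hne2 : c ≠ i := ne_of_gt hi
          simp only [ofLex_toLex, Finsupp.coe_add, Pi.add_apply, Finsupp.coe_tsub,
            Pi.sub_apply, Finsupp.single_eq_of_ne' hne1, Finsupp.single_eq_of_ne' hne2]
          omega
        · have hne1 : ℓ ≠ c := ne_of_gt hcl
          simp only [ofLex_toLex, Finsupp.coe_add, Pi.add_apply, Finsupp.coe_tsub,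
            Pi.sub_apply, Finsupp.single_eq_of_ne' hne1, Finsupp.single_eq_same]
          omega
      have hle'' : m'' ≤ mm + Finsupp.single c 1 := by
        rw [← huw0, hm'']
        rw [Finsupp.le_def]
        intro i
        have h1 := Finsupp.le_def.mp (tsub_le_self : w0 - Finsupp.single ℓ 1 ≤ w0) i
        simp only [Finsupp.coe_add, Pi.add_apply]
        omega
      exact mon_mem_monIdeal.mpr ⟨m'', Or.inr ⟨hm''W, hltm''⟩, hle''⟩
  -- assemble `genByVars`
  rw [hPR]
  refine ⟨{s | mon K (mm + Finsupp.single s 1) ∈ monIdeal K (TJ ∪ WGT)}, ?_⟩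
  apply le_antisymm
  · rw [colon_monIdeal, monIdeal_le_iff]
    rintro _ ⟨t, htU, rfl⟩
    by_cases hzero : t - mm = 0
    · exfalso
      apply hnot
      rw [hPR]
      exact mon_mem_monIdeal.mpr ⟨t, htU, tsub_eq_zero_iff_le.mp hzero⟩
    · obtain ⟨s, hzs, hsA⟩ := hKEY (t - mm) hzero
        (mon_mem_monIdeal.mpr ⟨t, htU, le_tsub_add⟩)
      have hdiv : mon K (t - mm) = mon K ((t - mm) - Finsupp.single s 1)
          * MvPolynomial.X s := by
        rw [X_eq_mon, mon_mul,
          tsub_add_cancel_of_le (Finsupp.single_le_iff.mpr (by omega))]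
      rw [hdiv]
      exact Ideal.mul_mem_left _ _ (Ideal.subset_span ⟨s, hsA, rfl⟩)
  · rw [Ideal.span_le]
    rintro _ ⟨s, hsA, rfl⟩
    rw [SetLike.mem_coe, Ideal.mem_colon_span_singleton]
    show (MvPolynomial.X s : MvPolynomial (Fin n) K) * mon K mm ∈ monIdeal K (TJ ∪ WGT)
    rw [X_eq_mon, mon_mul,
      show Finsupp.single s 1 + mm = mm + Finsupp.single s 1 from add_comm _ _]
    exact hsA

end PartC1
section PartC2

variable {K : Type} [Field K]

theorem hasLinRes_fixdeg {n : ℕ} {T : Set (Fin n →₀ ℕ)} {e d : ℕ}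
    (hT : ∀ w ∈ T, mdeg w = d) (h : HasLinRes (monIdeal K T) e) :
    HasLinRes (monIdeal K T) d := by
  rcases Set.eq_empty_or_nonempty T with rfl | ⟨s₀, hs₀⟩
  · exact hasLinRes_congr (monIdeal_empty).symm (hasLinRes_bot d)
  · obtain ⟨F, hFdg⟩ := h
    have hJspan : monIdeal K T = Ideal.span (Set.range F.g) := by
      have h1 := F.aug_range
      rw [Fintype.range_linearCombination] at h1
      exact h1.symm
    have hghom : ∀ f ∈ Set.range F.g, MvPolynomial.IsHomogeneous f e := by
      rintro f ⟨k, rfl⟩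
      have := F.g_hom k
      rwa [hFdg 0 k, Nat.zero_add] at this
    have hmons : mon K s₀ ∈ Ideal.span (Set.range F.g) := by
      rw [← hJspan]
      exact mon_mem_monIdeal.mpr ⟨s₀, hs₀, le_refl _⟩
    have hed : e ≤ d := by
      have h1 := le_mdeg_of_mem_span_homog hghom hmons s₀ (by rw [support_mon]; simp)
      rwa [hT s₀ hs₀] at h1
    have hde : d ≤ e := by
      have hex : ∃ k, F.g k ≠ 0 := by
        by_contra hc
        push_neg at hc
        have hbot : Ideal.span (Set.range F.g) = ⊥ := by
          rw [Ideal.span_eq_bot]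
          rintro _ ⟨k, rfl⟩
          exact hc k
        rw [hbot, Ideal.mem_bot] at hmons
        exact mon_ne_zero s₀ hmons
      obtain ⟨k, hk⟩ := hex
      have hgJ : F.g k ∈ monIdeal K T := by
        have h2 : F.g k ∈ LinearMap.range (Fintype.linearCombination (MvPolynomial (Fin n) K)
            F.g) :=
          ⟨Pi.single k 1, by simp [Fintype.linearCombination_apply, Pi.single_apply]⟩
        rwa [F.aug_range] at h2
      have hsupp : (F.g k).support.Nonempty := by
        rw [Finset.nonempty_iff_ne_empty]
        intro hc
        exact hk (MvPolynomial.support_eq_empty.mp hc)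
      obtain ⟨m, hm⟩ := hsupp
      obtain ⟨t, htT, htm⟩ := mem_monIdeal.mp hgJ m hm
      have h1 : mdeg m = e := mdeg_of_isHomogeneous
        (by have := F.g_hom k; rwa [hFdg 0 k, Nat.zero_add] at this) hm
      have h2 : mdeg t ≤ mdeg m := mdeg_mono htm
      rw [hT t htT, h1] at h2
      exact h2
    have : e = d := le_antisymm hed hde
    rw [← this]
    exact ⟨F, hFdg⟩

end PartC2
/-- Let `J ⊆ I` be monomial ideals such that `I` is linear over `J`:
`G(I) = G(J) ∪ {v_1, …, v_r}` (here `G(J) = S`) and each colon ideal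
`(J, v_1, …, v_{i-1}) : v_i` is generated by linear forms.  If `J` is componentwise
linear, then so is `I`.  Moreover, if `J` has a linear resolution and `I` is generated in
a single degree, then `I` has a linear resolution. -/
theorem stmt_12 {K : Type} [Field K] {n r : ℕ} (S : Set (Fin n →₀ ℕ)) (hfin : S.Finite)
    (v : Fin r → (Fin n →₀ ℕ)) (hinj : Function.Injective v) (hv : ∀ i, v i ∉ S)
    (hmin : IsMinGenSet (S ∪ Set.range v))
    (hlin : ∀ i : Fin r, genByLinForms (Submodule.colon
        (monIdeal K (S ∪ ((fun j => v j) '' {j | j < i})))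
        (Ideal.span {mon K (v i)}))) :
    (CompLinear K (monIdeal K S) → CompLinear K (monIdeal K (S ∪ Set.range v))) ∧
    (∀ d : ℕ, (∃ e, HasLinRes (monIdeal K S) e) →
      (∀ w ∈ S ∪ Set.range v, mdeg w = d) →
      ∃ e, HasLinRes (monIdeal K (S ∪ Set.range v)) e) := by

  classical
  have hSSr : (S ∪ (fun j => v j) '' {i : Fin r | (i : ℕ) < r}) = S ∪ Set.range v := by
    congr 1
    ext w
    constructor
    · rintro ⟨i, _, rfl⟩
      exact ⟨i, rfl⟩
    · rintro ⟨i, rfl⟩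
      exact ⟨i, i.isLt, rfl⟩
  have hsplitSS : ∀ (m : ℕ) (hm : m < r),
      (S ∪ (fun j => v j) '' {i : Fin r | (i : ℕ) < m + 1})
        = (S ∪ (fun j => v j) '' {i : Fin r | (i : ℕ) < m}) ∪ {v ⟨m, hm⟩} := by
    intro m hm
    ext w
    simp only [Set.mem_union, Set.mem_image, Set.mem_setOf_eq, Set.mem_singleton_iff]
    constructor
    · rintro (hS | ⟨i', hi', rfl⟩)
      · exact Or.inl (Or.inl hS)
      · rcases Nat.lt_or_ge (i' : ℕ) m with h' | h'
        · exact Or.inl (Or.inr ⟨i', h', rfl⟩)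
        · have hieq : i' = ⟨m, hm⟩ := Fin.ext (show (i' : ℕ) = m by omega)
          rw [hieq]
          exact Or.inr rfl
    · rintro ((hS | ⟨i', hi', rfl⟩) | heq)
      · exact Or.inl hS
      · exact Or.inr ⟨i', by omega, rfl⟩
      · exact Or.inr ⟨⟨m, hm⟩, Nat.lt_succ_self m, heq.symm⟩
  have hlin' : ∀ (m : ℕ) (hm : m < r), genByLinForms (Submodule.colon
      (monIdeal K (S ∪ (fun j => v j) '' {i : Fin r | (i : ℕ) < m}))
      (Ideal.span {mon K (v ⟨m, hm⟩)})) := by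
    intro m hm
    have h := hlin ⟨m, hm⟩
    have hseteq : {i : Fin r | i < (⟨m, hm⟩ : Fin r)} = {i : Fin r | (i : ℕ) < m} := by
      ext i
      simp [Fin.lt_def]
    rwa [hseteq] at h
  have hanti : ∀ (m : ℕ) (hm : m < r) (t : Fin n →₀ ℕ),
      t ∈ S ∪ (fun j => v j) '' {i : Fin r | (i : ℕ) < m} → ¬ v ⟨m, hm⟩ ≤ t := by
    intro m hm t ht hle
    rcases ht with htS | ⟨i', hi', rfl⟩
    · have heq := hmin (v ⟨m, hm⟩) (Or.inr ⟨⟨m, hm⟩, rfl⟩) t (Or.inl htS) hle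
      rw [← heq] at htS
      exact hv _ htS
    · have heq := hmin (v ⟨m, hm⟩) (Or.inr ⟨⟨m, hm⟩, rfl⟩) (v i') (Or.inr ⟨i', rfl⟩) hle
      have h2 := hinj heq
      rw [← h2] at hi'
      simp only [Set.mem_setOf_eq] at hi'
      exact absurd hi' (lt_irrefl m)
  constructor
  · -- Part 1: componentwise linearity
    intro hCL j
    rw [component_monIdeal]
    have hallc : ∀ m, m ≤ r → HasLinRes (monIdeal K
        {m' | mdeg m' = j ∧
          ∃ t ∈ S ∪ (fun j => v j) '' {i : Fin r | (i : ℕ) < m}, t ≤ m'}) j := by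
      intro m
      induction m with
      | zero =>
        intro _
        have h0 := hCL j
        rw [component_monIdeal] at h0
        refine hasLinRes_congr ?_ h0
        have hempty : {i : Fin r | (i : ℕ) < 0} = ∅ := by
          ext i
          simp
        rw [hempty, Set.image_empty, Set.union_empty]
      | succ m ihm =>
        intro hm1
        have hm : m < r := by omega
        have hprev := ihm (by omega)
        have hstep := step_component (K := K) j
          (S ∪ (fun j => v j) '' {i : Fin r | (i : ℕ) < m}) (v ⟨m, hm⟩)
          (fun t ht => hanti m hm t ht) (hlin' m hm) hprev
        refine hasLinRes_congr ?_ hstep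
        rw [hsplitSS m hm]
        congr 1
        ext w
        constructor
        · rintro (⟨hdw, t, htSS, htw⟩ | ⟨hdw, huw⟩)
          · exact ⟨hdw, t, Or.inl htSS, htw⟩
          · exact ⟨hdw, v ⟨m, hm⟩, Or.inr rfl, huw⟩
        · rintro ⟨hdw, t, htU, htw⟩
          rcases htU with htSS | hteq
          · exact Or.inl ⟨hdw, t, htSS, htw⟩
          · right
            refine ⟨hdw, ?_⟩
            rw [← hteq]
            exact htw
    have hfin2 := hallc r le_rfl
    refine hasLinRes_congr ?_ hfin2
    rw [hSSr]
  · -- Part 2: single degree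
    intro d hJlin hdeg2
    have hbase : HasLinRes (monIdeal K S) d := by
      obtain ⟨e, he⟩ := hJlin
      exact hasLinRes_fixdeg (fun w hw => hdeg2 w (Or.inl hw)) he
    have hall : ∀ m, m ≤ r → HasLinRes (monIdeal K
        (S ∪ (fun j => v j) '' {i : Fin r | (i : ℕ) < m})) d := by
      intro m
      induction m with
      | zero =>
        intro _
        refine hasLinRes_congr ?_ hbase
        have hempty : {i : Fin r | (i : ℕ) < 0} = ∅ := by
          ext i
          simp
        rw [hempty, Set.image_empty, Set.union_empty]
      | succ m ihm =>
        intro hm1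
        have hm : m < r := by omega
        have hprev := ihm (by omega)
        have hcol := hlin' m hm
        rw [colon_monIdeal] at hcol
        have hgv := genByVars_of_monIdeal_genByLinForms hcol
        rw [← colon_monIdeal] at hgv
        have hhom : (mon K (v ⟨m, hm⟩)).IsHomogeneous d := by
          have h3 := mon_isHomogeneous (K := K) (v ⟨m, hm⟩)
          rwa [hdeg2 (v ⟨m, hm⟩) (Or.inr ⟨⟨m, hm⟩, rfl⟩)] at h3
        have hstep := cone_lemma hhom hprev (genByVars_hasLinRes hgv)
        refine hasLinRes_congr ?_ hstep
        rw [hsplitSS m hm,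
          monIdeal_union (S ∪ (fun j => v j) '' {i : Fin r | (i : ℕ) < m}) {v ⟨m, hm⟩},
          monIdeal_singleton]
    refine ⟨d, ?_⟩
    have hfin2 := hall r le_rfl
    rwa [hSSr] at hfin2
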